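/- Let f : ℝ → ℝ be continuous and integrable on [0, ∞), and let a > 0. Then lim_{ε→0⁺} ∫₀^∞ (ε / ((r − a)² + ε²)) f(r) dr = π f(a). -/

import Mathlib

open MeasureTheory Filter

private lemma poisson_kernel_interval_integral {a : ℝ} (ha : 0 < a) {ε : ℝ} (hε : 0 < ε) :
    ∫ x in Set.Ioc 0 (2 * a), ε / ((x - a) ^ 2 + ε ^ 2)
      = Real.arctan (a / ε) - Real.arctan (-a / ε) := by
  rw [← intervalIntegral.integral_of_le (by nlinarith : (0:ℝ) ≤ 2 * a)]
  have : ∀ x ∈ Set.uIcc (0:ℝ) (2*a), HasDerivAt (fun x => Real.arctan ((x - a) / ε))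
      (ε / ((x - a) ^ 2 + ε ^ 2)) x := by
    intro x _
    have h1 : HasDerivAt (fun x : ℝ => (x - a) / ε) (1 / ε) x := by
      simpa using ((hasDerivAt_id x).sub_const a).div_const ε
    have h2 := (Real.hasDerivAt_arctan ((x - a) / ε)).comp x h1
    refine h2.congr_deriv ?_
    have hd : (x - a) ^ 2 + ε ^ 2 > 0 := by positivity
    field_simp
    ring
  rw [intervalIntegral.integral_eq_sub_of_hasDerivAt this]
  · congr 1 <;> (congr 1; ring)
  · apply ContinuousOn.intervalIntegrable
    apply ContinuousOn.div continuousOn_const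
    · fun_prop
    · intro x _; positivity

theorem poisson_kernel_limit_pos (f : ℝ → ℝ) (hf : Continuous f)
    (hint : IntegrableOn f (Set.Ici 0)) (a : ℝ) (ha : 0 < a) :
    Tendsto (fun ε : ℝ => ∫ r in Set.Ioi (0 : ℝ), ε / ((r - a) ^ 2 + ε ^ 2) * f r)
      (nhdsWithin 0 (Set.Ioi 0)) (nhds (Real.pi * f a)) := by
  set φ : ℝ → ℝ → ℝ := fun ε x => Real.pi⁻¹ * (ε / ((x - a) ^ 2 + ε ^ 2)) with hφ
  have hπ : (0:ℝ) < Real.pi := Real.pi_pos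
  have key : Tendsto (fun ε : ℝ => ∫ x in Set.Ioi (0:ℝ), φ ε x • f x)
      (nhdsWithin 0 (Set.Ioi 0)) (nhds (f a)) := by
    apply tendsto_setIntegral_peak_smul_of_integrableOn_of_tendsto
      (measurableSet_Ioi) (measurableSet_Ioc (a := (0:ℝ)) (b := 2*a))
      (Set.Ioc_subset_Ioi_self)
    · -- t ∈ 𝓝[s] a
      apply mem_nhdsWithin_of_mem_nhds
      exact Ioc_mem_nhds ha (by linarith)
    · -- finite measure
      exact (measure_Ioc_lt_top).ne
    · -- nonneg
      filter_upwards [self_mem_nhdsWithin] with ε (hε : 0 < ε) x hx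
      positivity
    · -- uniform convergence to 0 away from a
      intro u u_open hau
      rcases Metric.isOpen_iff.1 u_open a hau with ⟨δ, hδ, hball⟩
      rw [Metric.tendstoUniformlyOn_iff]
      intro η hη
      have hmem : Set.Ioo (0:ℝ) (η * Real.pi * δ ^ 2) ∈ nhdsWithin 0 (Set.Ioi 0) :=
        Ioo_mem_nhdsGT_of_mem ⟨le_rfl, by positivity⟩
      filter_upwards [hmem] with ε hε x hx
      obtain ⟨hx1, hx2⟩ := hx
      have hdist : δ ≤ |x - a| := by
        by_contra h
        push_neg at h
        exact hx2 (hball (by rwa [Metric.mem_ball, Real.dist_eq]))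
      have hsq : δ ^ 2 ≤ (x - a) ^ 2 := by
        have := sq_abs (x - a)
        nlinarith [abs_nonneg (x - a)]
      have hd : (0:ℝ) < (x - a) ^ 2 + ε ^ 2 := by nlinarith [hε.1]
      have hle : φ ε x ≤ Real.pi⁻¹ * (ε / δ ^ 2) := by
        have h1 : ε / ((x - a) ^ 2 + ε ^ 2) ≤ ε / δ ^ 2 :=
          div_le_div_of_nonneg_left hε.1.le (by positivity) (by nlinarith [hε.1])
        exact mul_le_mul_of_nonneg_left h1 (by positivity)
      have hpos : 0 ≤ φ ε x := mul_nonneg (by positivity) (div_nonneg hε.1.le hd.le)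
      rw [Pi.zero_apply, Real.dist_eq]
      rw [abs_sub_comm, sub_zero, abs_of_nonneg hpos]
      calc φ ε x ≤ Real.pi⁻¹ * (ε / δ ^ 2) := hle
        _ < η := by
          rw [mul_div_assoc'] at *
          rw [div_lt_iff₀ (by positivity)]
          calc Real.pi⁻¹ * ε < Real.pi⁻¹ * (η * Real.pi * δ ^ 2) := by
                exact mul_lt_mul_of_pos_left hε.2 (by positivity)
            _ = η * δ ^ 2 := by field_simp
    · -- integral tends to 1
      have hcongr : ∀ᶠ ε in nhdsWithin (0:ℝ) (Set.Ioi 0),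
          (∫ x in Set.Ioc 0 (2*a), φ ε x)
            = Real.pi⁻¹ * (Real.arctan (a / ε) - Real.arctan (-a / ε)) := by
        filter_upwards [self_mem_nhdsWithin] with ε (hε : 0 < ε)
        rw [hφ]
        simp only
        rw [integral_const_mul, poisson_kernel_interval_integral ha hε]
      rw [tendsto_congr' hcongr]
      have h1 : Tendsto (fun ε : ℝ => a / ε) (nhdsWithin 0 (Set.Ioi 0)) atTop := by
        have := tendsto_inv_nhdsGT_zero.const_mul_atTop ha
        simpa [div_eq_mul_inv] using this
      have h2 : Tendsto (fun ε : ℝ => -a / ε) (nhdsWithin 0 (Set.Ioi 0)) atBot := by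
        have : Tendsto (fun ε : ℝ => -(a / ε)) (nhdsWithin 0 (Set.Ioi 0)) atBot :=
          tendsto_neg_atBot_iff.2 h1
        simpa [neg_div] using this
      have harctop := Real.tendsto_arctan_atTop.mono_right nhdsWithin_le_nhds
      have harcbot := Real.tendsto_arctan_atBot.mono_right nhdsWithin_le_nhds
      have := ((harctop.comp h1).sub (harcbot.comp h2)).const_mul (Real.pi⁻¹)
      have heq : Real.pi⁻¹ * (Real.pi / 2 - -(Real.pi / 2)) = 1 := by
        field_simp
        norm_num
      rw [heq] at this
      exact this
    · -- measurability
      filter_upwards [self_mem_nhdsWithin] with ε (hε : 0 < ε)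
      apply Continuous.aestronglyMeasurable
      apply Continuous.mul continuous_const
      apply Continuous.div continuous_const (by fun_prop)
      intro x
      positivity
    · -- integrability of f
      exact hint.mono_set Set.Ioi_subset_Ici_self
    · -- limit of f at a
      exact (hf.tendsto a).mono_left nhdsWithin_le_nhds
  have := key.const_mul Real.pi
  have hne : Real.pi ≠ 0 := hπ.ne'
  refine this.congr (fun ε => ?_)
  rw [← integral_const_mul]
  congr 1
  ext x
  rw [hφ]
  simp only [smul_eq_mul]
  rw [show Real.pi * (Real.pi⁻¹ * (ε / ((x - a) ^ 2 + ε ^ 2)) * f x)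
      = (Real.pi * Real.pi⁻¹) * (ε / ((x - a) ^ 2 + ε ^ 2) * f x) from by ring,
    mul_inv_cancel₀ hne, one_mul]
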